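/- Let c, e ∈ O be observed vertices lying in different connected components of the induced subgraph of G_T on O. Suppose that for every observed b ∈ O adjacent to c in G_T and every observed f ∈ O adjacent to e in G_T, the four vertices b, c, e, f are pairwise adjacent in G_c. Then there exists a hidden vertex d ∈ Hid such that d is adjacent to both c and e in G_T (i.e., c − d − e is a path in G_T). -/

import Mathlib

open SimpleGraph

section Helpers
variable {V : Type*} {G : SimpleGraph V}


lemma adj_of_walk_length_one {u v : V} (w : G.Walk u v) (h : w.length = 1) : G.Adj u v := by
  cases w with
  | nil => simp at h
  | cons hadj p =>
    cases p with
    | nil => exact hadj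
    | cons h2 p => simp [SimpleGraph.Walk.length_cons] at h

lemma mid_of_walk_length_two {u v : V} (w : G.Walk u v) (h : w.length = 2) :
    ∃ m, G.Adj u m ∧ G.Adj m v := by
  cases w with
  | nil => simp at h
  | cons hadj p => exact ⟨_, hadj, adj_of_walk_length_one p (by simpa using h)⟩

lemma adj_of_dist_one (hconn : G.Connected) {u v : V} (h : G.dist u v = 1) : G.Adj u v := by
  obtain ⟨p, _, hl⟩ := hconn.exists_path_of_dist u v
  exact adj_of_walk_length_one p (hl.trans h)

lemma mid_of_dist_two (hconn : G.Connected) {u v : V} (h : G.dist u v = 2) :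
    ∃ m, G.Adj u m ∧ G.Adj m v := by
  obtain ⟨p, _, hl⟩ := hconn.exists_path_of_dist u v
  exact mid_of_walk_length_two p (hl.trans h)

lemma path_length_eq_dist (hconn : G.Connected) (hacyc : G.IsAcyclic) {u v : V}
    (p : G.Walk u v) (hp : p.IsPath) : p.length = G.dist u v := by
  obtain ⟨q, hq, hl⟩ := hconn.exists_path_of_dist u v
  have := hacyc.path_unique (⟨p, hp⟩ : G.Path u v) ⟨q, hq⟩
  rw [show p = q from congrArg Subtype.val this, hl]

end Helpers


/-- The graph `G_c` on the observed vertices: distinct observed `a, b` are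
adjacent iff `dist(a,b) ≤ 2` in `G`, or there is a hidden vertex `l` with
`dist(a,l) ≤ 2` and `dist(b,l) ≤ 2`. -/
def Gc {V : Type*} (G : SimpleGraph V) (HidS : Set V) :
    SimpleGraph {v : V // v ∉ HidS} where
  Adj a b := a ≠ b ∧ (G.dist a.1 b.1 ≤ 2 ∨
    ∃ l ∈ HidS, G.dist a.1 l ≤ 2 ∧ G.dist b.1 l ≤ 2)
  symm := by
    constructor
    rintro a b ⟨hab, h⟩
    refine ⟨hab.symm, ?_⟩
    rcases h with h | ⟨l, hl, h1, h2⟩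
    · exact Or.inl (by rwa [SimpleGraph.dist_comm])
    · exact Or.inr ⟨l, hl, h2, h1⟩
  loopless := by constructor; rintro a ⟨h, -⟩; exact h rfl

/-- Hidden-node insertion: if `c` and `e` are observed vertices in different
connected components of the induced observed subgraph of the tree `G_T`, and
every pair of observed tree-neighbors `b` of `c` and `f` of `e` makes
`b, c, e, f` pairwise adjacent in `G_c`, then there is a hidden vertex `d`
adjacent in `G_T` to both `c` and `e` (so `c − d − e` is a path in `G_T`). -/
theorem hidden_node_between_components {V : Type*} [Fintype V] [DecidableEq V]
    (G : SimpleGraph V) [DecidableRel G.Adj]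
    (hconn : G.Connected) (hacyc : G.IsAcyclic)
    (HidS : Set V) [DecidablePred (· ∈ HidS)]
    (hHid4 : ∀ l₁ ∈ HidS, ∀ l₂ ∈ HidS, l₁ ≠ l₂ → 4 ≤ G.dist l₁ l₂)
    (hleaf : ∀ l ∈ HidS, ∀ v : V, G.degree v = 1 → 3 ≤ G.dist l v)
    (c e : {v : V // v ∉ HidS})
    (hdiff : (G.induce {v : V | v ∉ HidS}).connectedComponentMk c ≠
      (G.induce {v : V | v ∉ HidS}).connectedComponentMk e)
    (hclique : ∀ b : {v : V // v ∉ HidS}, G.Adj b.1 c.1 →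
      ∀ f : {v : V // v ∉ HidS}, G.Adj e.1 f.1 →
        (Gc G HidS).Adj b c ∧ (Gc G HidS).Adj b e ∧ (Gc G HidS).Adj b f ∧
        (Gc G HidS).Adj c e ∧ (Gc G HidS).Adj c f ∧ (Gc G HidS).Adj e f) :
    ∃ d ∈ HidS, G.Adj c.1 d ∧ G.Adj d e.1 := by
  classical
  -- adjacency between observed vertices puts them in the same component
  have compAdj : ∀ (x y : {v : V // v ∉ HidS}), G.Adj x.1 y.1 →
      (G.induce {v : V | v ∉ HidS}).connectedComponentMk x =
      (G.induce {v : V | v ∉ HidS}).connectedComponentMk y := by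
    intro x y h
    exact SimpleGraph.ConnectedComponent.sound
      (SimpleGraph.Adj.reachable (show (G.induce {v : V | v ∉ HidS}).Adj x y from h))
  have hne : c ≠ e := fun h => hdiff (by rw [h])
  have hce1 : c.1 ≠ e.1 := fun h => hne (Subtype.ext h)
  have notadj_ce : ¬ G.Adj c.1 e.1 := fun h => hdiff (compAdj c e h)
  have notMid : ∀ m, m ∉ HidS → G.Adj c.1 m → G.Adj m e.1 → False := by
    intro m hm h1 h2
    exact hdiff ((compAdj c ⟨m, hm⟩ h1).trans (compAdj ⟨m, hm⟩ e h2))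
  -- every vertex with a neighbor has an observed one (if itself observed)
  have obsNbr : ∀ (v : {v : V // v ∉ HidS}) (x : V), G.Adj v.1 x →
      ∃ b : V, b ∉ HidS ∧ G.Adj v.1 b := by
    intro v x hx
    by_cases hxH : x ∈ HidS
    · by_cases hex : ∃ y ∈ G.neighborFinset v.1, y ≠ x
      · obtain ⟨y, hy, hyx⟩ := hex
        rw [SimpleGraph.mem_neighborFinset] at hy
        refine ⟨y, fun hyH => ?_, hy⟩
        have h4 := hHid4 y hyH x hxH hyx
        have h2 : G.dist y x ≤ 2 :=
          le_trans (SimpleGraph.dist_le (Walk.cons hy.symm (Walk.cons hx Walk.nil))) (by simp)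
        omega
      · push_neg at hex
        have hset : G.neighborFinset v.1 = {x} :=
          Finset.eq_singleton_iff_unique_mem.mpr
            ⟨(SimpleGraph.mem_neighborFinset _ _ _).mpr hx, hex⟩
        have hdeg : G.degree v.1 = 1 := by
          simp [← SimpleGraph.card_neighborFinset_eq_degree, hset]
        have h3 := hleaf x hxH v.1 hdeg
        have h1 : G.dist x v.1 ≤ 1 :=
          le_trans (SimpleGraph.dist_le (Walk.cons hx.symm Walk.nil)) (by simp)
        omega
    · exact ⟨x, hxH, hx⟩
  have exNbr : ∀ u v : V, u ≠ v → ∃ x, G.Adj u x := by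
    intro u v huv
    obtain ⟨w⟩ := hconn.preconnected u v
    cases w with
    | nil => exact absurd rfl huv
    | cons h p => exact ⟨_, h⟩
  -- observed neighbor of both c and e, of some sort
  obtain ⟨x, hx⟩ := exNbr c.1 e.1 hce1
  obtain ⟨b₀, hb₀O, hb₀⟩ := obsNbr c x hx
  obtain ⟨y₀, hy₀⟩ := exNbr e.1 c.1 hce1.symm
  obtain ⟨f₀, hf₀O, hf₀⟩ := obsNbr e y₀ hy₀
  obtain ⟨-, -, -, ⟨-, hce2⟩, -, -⟩ := hclique ⟨b₀, hb₀O⟩ hb₀.symm ⟨f₀, hf₀O⟩ hf₀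
  -- if dist c e ≤ 2, we are done
  have finish2 : G.dist c.1 e.1 ≤ 2 → ∃ d ∈ HidS, G.Adj c.1 d ∧ G.Adj d e.1 := by
    intro h
    have h0 : G.dist c.1 e.1 ≠ 0 := fun h0 => hce1 (hconn.dist_eq_zero_iff.mp h0)
    have h1 : G.dist c.1 e.1 ≠ 1 := fun h1 => notadj_ce (adj_of_dist_one hconn h1)
    have h2 : G.dist c.1 e.1 = 2 := by omega
    obtain ⟨m, hm1, hm2⟩ := mid_of_dist_two hconn h2
    by_cases hmH : m ∈ HidS
    · exact ⟨m, hmH, hm1, hm2⟩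
    · exact absurd (notMid m hmH hm1 hm2) (by simp)
  -- helper: if u is observed with dist u l' = 2 via neighbor m adjacent to hidden l',
  -- then u has an observed neighbor b ≠ m
  have otherNbr : ∀ (u m l' : V), l' ∈ HidS → G.Adj u m → G.Adj m l' → G.dist u l' = 2 →
      ∃ b, b ∉ HidS ∧ G.Adj u b ∧ b ≠ m := by
    intro u m l' hl' hum hml' hd
    by_cases hex : ∃ b' ∈ G.neighborFinset u, b' ≠ m
    · obtain ⟨b, hb, hbm⟩ := hex
      rw [SimpleGraph.mem_neighborFinset] at hb
      refine ⟨b, fun hbH => ?_, hb, hbm⟩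
      have hbl : b ≠ l' := by
        rintro rfl
        have : G.dist u b ≤ 1 := le_trans (SimpleGraph.dist_le (Walk.cons hb Walk.nil)) (by simp)
        omega
      have h4 := hHid4 b hbH l' hl' hbl
      have h3 : G.dist b l' ≤ 3 :=
        le_trans (SimpleGraph.dist_le
          (Walk.cons hb.symm (Walk.cons hum (Walk.cons hml' Walk.nil)))) (by simp)
      omega
    · push_neg at hex
      have hset : G.neighborFinset u = {m} :=
        Finset.eq_singleton_iff_unique_mem.mpr
          ⟨(SimpleGraph.mem_neighborFinset _ _ _).mpr hum, hex⟩
      have hdeg : G.degree u = 1 := by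
        simp [← SimpleGraph.card_neighborFinset_eq_degree, hset]
      have h3 := hleaf l' hl' u hdeg
      rw [SimpleGraph.dist_comm] at h3
      omega
  rcases hce2 with h | ⟨l, hlH, hcl, hel⟩
  · exact finish2 h
  · have hcl0 : G.dist c.1 l ≠ 0 := fun h0 => c.2 (hconn.dist_eq_zero_iff.mp h0 ▸ hlH)
    have hel0 : G.dist e.1 l ≠ 0 := fun h0 => e.2 (hconn.dist_eq_zero_iff.mp h0 ▸ hlH)
    by_cases hc1 : G.dist c.1 l = 1
    · by_cases he1 : G.dist e.1 l = 1
      · exact ⟨l, hlH, adj_of_dist_one hconn hc1, (adj_of_dist_one hconn he1).symm⟩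
      · -- dist c l = 1, dist e l = 2
        have he2 : G.dist e.1 l = 2 := by omega
        have hcladj : G.Adj c.1 l := adj_of_dist_one hconn hc1
        obtain ⟨y, hey, hyl⟩ := mid_of_dist_two hconn he2
        have hyO : y ∉ HidS := by
          intro hyH
          have h4 := hHid4 y hyH l hlH hyl.ne
          have h1 : G.dist y l ≤ 1 :=
            le_trans (SimpleGraph.dist_le (Walk.cons hyl Walk.nil)) (by simp)
          omega
        have hyc : y ≠ c.1 := by rintro rfl; exact notadj_ce hey.symm
        obtain ⟨f, hfO, hef, hfy⟩ := otherNbr e.1 y l hlH hey hyl he2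
        have hfc : f ≠ c.1 := by rintro rfl; exact notadj_ce hef.symm
        have hfl : f ≠ l := by
          rintro rfl
          have : G.dist e.1 f ≤ 1 :=
            le_trans (SimpleGraph.dist_le (Walk.cons hef Walk.nil)) (by simp)
          omega
        obtain ⟨-, -, -, -, ⟨-, hcf⟩, -⟩ := hclique ⟨b₀, hb₀O⟩ hb₀.symm ⟨f, hfO⟩ hef
        replace hcf : G.dist c.1 f ≤ 2 ∨
            ∃ l' ∈ HidS, G.dist c.1 l' ≤ 2 ∧ G.dist f l' ≤ 2 := hcf
        exfalso
        -- path c - l - y - e - f has length 4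
        have hpath : (Walk.cons hcladj (Walk.cons hyl.symm (Walk.cons hey.symm
            (Walk.cons hef Walk.nil)))).IsPath := by
          simp [Walk.cons_isPath_iff]
          exact ⟨⟨⟨hef.ne, hey.ne', Ne.symm hfy⟩, hyl.ne', fun h => e.2 (h ▸ hlH), Ne.symm hfl⟩,
            fun h => c.2 (h.symm ▸ hlH), Ne.symm hyc, hce1, Ne.symm hfc⟩
        have hd4 : G.dist c.1 f = 4 := by
          rw [← path_length_eq_dist hconn hacyc _ hpath]; simp
        -- path f - e - y - l has length 3
        have hpath2 : (Walk.cons hef.symm (Walk.cons hey (Walk.cons hyl Walk.nil))).IsPath := by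
          simp [Walk.cons_isPath_iff]
          exact ⟨⟨hyl.ne, hey.ne, fun h => e.2 (h.symm ▸ hlH)⟩, hef.ne', hfy, hfl⟩
        have hd3 : G.dist f l = 3 := by
          rw [← path_length_eq_dist hconn hacyc _ hpath2]; simp
        rcases hcf with h | ⟨l', hl'H, hcl', hfl'⟩
        · omega
        · by_cases hl'l : l' = l
          · subst hl'l; omega
          · have h4 := hHid4 l' hl'H l hlH hl'l
            have htri := hconn.dist_triangle (u := l') (v := c.1) (w := l)
            rw [SimpleGraph.dist_comm] at hcl'
            omega
    · have hc2 : G.dist c.1 l = 2 := by omega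
      obtain ⟨m, hcm, hml⟩ := mid_of_dist_two hconn hc2
      have hmO : m ∉ HidS := by
        intro hmH
        have h4 := hHid4 m hmH l hlH hml.ne
        have h1 : G.dist m l ≤ 1 :=
          le_trans (SimpleGraph.dist_le (Walk.cons hml Walk.nil)) (by simp)
        omega
      have hme : m ≠ e.1 := by rintro rfl; exact notadj_ce hcm
      obtain ⟨b, hbO, hcb, hbm⟩ := otherNbr c.1 m l hlH hcm hml hc2
      have hbe : b ≠ e.1 := by rintro rfl; exact notadj_ce hcb
      by_cases he1 : G.dist e.1 l = 1
      · -- dist c l = 2, dist e l = 1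
        have heladj : G.Adj e.1 l := adj_of_dist_one hconn he1
        obtain ⟨-, ⟨-, hbe2⟩, -, -, -, -⟩ := hclique ⟨b, hbO⟩ hcb.symm ⟨f₀, hf₀O⟩ hf₀
        replace hbe2 : G.dist b e.1 ≤ 2 ∨
            ∃ l' ∈ HidS, G.dist b l' ≤ 2 ∧ G.dist e.1 l' ≤ 2 := hbe2
        exfalso
        -- path b - c - m - l - e has length 4
        have hpath : (Walk.cons hcb.symm (Walk.cons hcm (Walk.cons hml
            (Walk.cons heladj.symm Walk.nil)))).IsPath := by
          simp [Walk.cons_isPath_iff]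
          exact ⟨⟨⟨fun h => e.2 (h ▸ hlH), hml.ne, hme⟩, hcm.ne, fun h => c.2 (h.symm ▸ hlH), hce1⟩,
            hcb.ne', hbm, fun h => hbO (h.symm ▸ hlH), hbe⟩
        have hd4 : G.dist b e.1 = 4 := by
          rw [← path_length_eq_dist hconn hacyc _ hpath]; simp
        -- path b - c - m - l has length 3
        have hpath2 : (Walk.cons hcb.symm (Walk.cons hcm (Walk.cons hml Walk.nil))).IsPath := by
          simp [Walk.cons_isPath_iff]
          exact ⟨⟨hml.ne, hcm.ne, fun h => c.2 (h.symm ▸ hlH)⟩, hcb.ne', hbm, fun h => hbO (h.symm ▸ hlH)⟩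
        have hd3 : G.dist b l = 3 := by
          rw [← path_length_eq_dist hconn hacyc _ hpath2]; simp
        rcases hbe2 with h | ⟨l', hl'H, hbl', hel'⟩
        · omega
        · by_cases hl'l : l' = l
          · subst hl'l; omega
          · have h4 := hHid4 l' hl'H l hlH hl'l
            have htri := hconn.dist_triangle (u := l') (v := e.1) (w := l)
            rw [SimpleGraph.dist_comm] at hel'
            omega
      · -- dist c l = 2, dist e l = 2
        have he2 : G.dist e.1 l = 2 := by omega
        obtain ⟨y, hey, hyl⟩ := mid_of_dist_two hconn he2
        have hyO : y ∉ HidS := by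
          intro hyH
          have h4 := hHid4 y hyH l hlH hyl.ne
          have h1 : G.dist y l ≤ 1 :=
            le_trans (SimpleGraph.dist_le (Walk.cons hyl Walk.nil)) (by simp)
          omega
        have hyc : y ≠ c.1 := by rintro rfl; exact notadj_ce hey.symm
        have hmy : m ≠ y := by rintro rfl; exact notMid m hmO hcm hey.symm
        have hby : b ≠ y := by rintro rfl; exact notMid b hbO hcb hey.symm
        obtain ⟨-, ⟨-, hbe2⟩, -, -, -, -⟩ := hclique ⟨b, hbO⟩ hcb.symm ⟨f₀, hf₀O⟩ hf₀
        replace hbe2 : G.dist b e.1 ≤ 2 ∨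
            ∃ l' ∈ HidS, G.dist b l' ≤ 2 ∧ G.dist e.1 l' ≤ 2 := hbe2
        exfalso
        -- path b - c - m - l - y - e has length 5
        have hpath : (Walk.cons hcb.symm (Walk.cons hcm (Walk.cons hml
            (Walk.cons hyl.symm (Walk.cons hey.symm Walk.nil))))).IsPath := by
          simp [Walk.cons_isPath_iff]
          exact ⟨⟨⟨⟨hey.ne', hyl.ne', fun h => e.2 (h ▸ hlH)⟩, hml.ne, hmy, hme⟩,
            hcm.ne, fun h => c.2 (h.symm ▸ hlH), Ne.symm hyc, hce1⟩,
            hcb.ne', hbm, fun h => hbO (h.symm ▸ hlH), hby, hbe⟩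
        have hd5 : G.dist b e.1 = 5 := by
          rw [← path_length_eq_dist hconn hacyc _ hpath]; simp
        rcases hbe2 with h | ⟨l', hl'H, hbl', hel'⟩
        · omega
        · have htri := hconn.dist_triangle (u := b) (v := l') (w := e.1)
          rw [SimpleGraph.dist_comm] at hel'
          omega
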